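/- For every r ≥ 1, every n ≥ 2, every ε ∈ (0,1), every measurable estimator θ̂_r : ℕ^n → ℝ, and every measurable function h : ℝ → ℝ, one has sup over all probability mass functions P on ℕ of P_P( ℓ(θ̂_r(X_n), θ_r(P;X_n)) > ε ) = 1. In particular, minimax estimation of the r-order missing mass under the multiplicative loss is infeasible over the class of all discrete distributions. -/

import Mathlib

open MeasureTheory ProbabilityTheory Real Filter

noncomputable section

/-- The law of an i.i.d. sample of size `n` from the discrete distribution `P` on `ℕ`. -/
def sampleMeasure (P : PMF ℕ) (n : ℕ) : Measure (Fin n → ℕ) :=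
  Measure.pi fun _ => P.toMeasure

/-- The probability mass of symbol `j` under `P`, as a real number. -/
def pReal (P : PMF ℕ) (j : ℕ) : ℝ := (P j).toReal

/-- Empirical frequency of the symbol `j` in the sample `ω`. -/
def freq {n : ℕ} (ω : Fin n → ℕ) (j : ℕ) : ℕ :=
  (Finset.univ.filter fun i => ω i = j).card

/-- The `r`-order missing mass `θ_r(P; X_n)`. -/
def missingMass (p : ℕ → ℝ) (r : ℕ) {n : ℕ} (ω : Fin n → ℕ) : ℝ :=
  ∑' j, p j ^ r * (if freq ω j = 0 then 1 else 0)

/-- The multiplicative (relative) loss: `ℓ(t, θ) = |t/θ - 1|` if `θ > 0`, and `h t` otherwise. -/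
def mloss (h : ℝ → ℝ) (t θ : ℝ) : ℝ := if 0 < θ then |t / θ - 1| else h t

/-- The two-point distribution with mass `1-q` at `0` and `q` at `1`. -/
def twoPt (q : ℝ) (hq0 : 0 < q) (hq1 : q < 1) : PMF ℕ :=
  PMF.ofFinset (fun j => if j = 0 then ENNReal.ofReal (1 - q) else
      if j = 1 then ENNReal.ofReal q else 0) {0, 1}
    (by
      rw [Finset.sum_insert (by simp), Finset.sum_singleton]
      norm_num
      rw [← ENNReal.ofReal_add (by linarith) hq0.le]
      norm_num)
    (by
      intro a ha
      simp only [Finset.mem_insert, Finset.mem_singleton, not_or] at ha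
      simp [ha.1, ha.2])

lemma twoPt_zero (q : ℝ) (hq0 : 0 < q) (hq1 : q < 1) :
    twoPt q hq0 hq1 0 = ENNReal.ofReal (1 - q) := by
  simp [twoPt, PMF.ofFinset_apply]

lemma twoPt_one (q : ℝ) (hq0 : 0 < q) (hq1 : q < 1) :
    twoPt q hq0 hq1 1 = ENNReal.ofReal q := by
  simp [twoPt, PMF.ofFinset_apply]

lemma twoPt_other (q : ℝ) (hq0 : 0 < q) (hq1 : q < 1) (j : ℕ) (hj : 2 ≤ j) :
    twoPt q hq0 hq1 j = 0 := by
  simp only [twoPt, PMF.ofFinset_apply]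
  rw [if_neg (by omega), if_neg (by omega)]

/-- Minimax estimation of the `r`-order missing mass over all discrete distributions
is not feasible: for every estimator, the worst-case probability of a relative error larger
than `ε` equals one. -/
theorem missingMass_minimax_infeasible (r n : ℕ) (hr : 1 ≤ r) (hn : 2 ≤ n)
    (ε : ℝ) (hε : ε ∈ Set.Ioo (0 : ℝ) 1)
    (est : (Fin n → ℕ) → ℝ) (hest : Measurable est)
    (h : ℝ → ℝ) (hh : Measurable h) :
    ⨆ P : PMF ℕ,
      sampleMeasure P n
        {ω | mloss h (est ω) (missingMass (pReal P) r ω) > ε} = 1 := by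
  obtain ⟨hε0, hε1⟩ := hε
  set c : ℝ := est (fun _ => 0) with hc
  -- Key lemma: for suitable q, the sup is at least (1-q)^n
  have key : ∀ q : ℝ, ∀ hq0 : 0 < q, ∀ hq1 : q < 1, |c / q ^ r - 1| > ε →
      ENNReal.ofReal (1 - q) ^ n ≤
      ⨆ P : PMF ℕ, sampleMeasure P n
        {ω | mloss h (est ω) (missingMass (pReal P) r ω) > ε} := by
    intro q hq0 hq1 hloss
    set P := twoPt q hq0 hq1 with hP
    refine le_trans ?_ (le_iSup _ P)
    have hsub : (Set.univ.pi fun _ : Fin n => ({0} : Set ℕ)) ⊆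
        {ω | mloss h (est ω) (missingMass (pReal P) r ω) > ε} := by
      intro ω hω
      have hω0 : ω = fun _ => 0 := by
        funext i
        exact hω i (Set.mem_univ i)
      subst hω0
      have hfreq0 : freq (fun _ : Fin n => 0) 0 = n := by
        simp [freq]
      have hfreqj : ∀ j : ℕ, j ≠ 0 → freq (fun _ : Fin n => 0) j = 0 := by
        intro j hj
        rw [freq, Finset.card_eq_zero, Finset.filter_eq_empty_iff]
        intro i _
        omega
      have hθ : missingMass (pReal P) r (fun _ : Fin n => 0) = q ^ r := by
        rw [missingMass, tsum_eq_single 1]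
        · rw [hfreqj 1 one_ne_zero, if_pos rfl, mul_one, pReal, hP, twoPt_one,
            ENNReal.toReal_ofReal hq0.le]
        · intro j hj
          rcases Nat.lt_or_ge j 2 with hj2 | hj2
          · interval_cases j
            · rw [hfreq0, if_neg (by omega), mul_zero]
            · exact absurd rfl hj
          · rw [pReal, hP, twoPt_other q hq0 hq1 j hj2]
            simp [zero_pow (by omega : r ≠ 0)]
      show mloss h (est fun _ => 0) (missingMass (pReal P) r fun _ => 0) > ε
      rw [hθ, mloss, if_pos (pow_pos hq0 r)]
      exact hloss
    calc ENNReal.ofReal (1 - q) ^ n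
        = sampleMeasure P n (Set.univ.pi fun _ : Fin n => ({0} : Set ℕ)) := by
          rw [sampleMeasure, Measure.pi_pi]
          rw [Finset.prod_const, Finset.card_univ, Fintype.card_fin]
          congr 1
          rw [PMF.toMeasure_apply_singleton _ _ (measurableSet_singleton 0), hP, twoPt_zero]
      _ ≤ _ := measure_mono hsub
  refine le_antisymm ?_ ?_
  · refine iSup_le fun P => ?_
    have : IsProbabilityMeasure (sampleMeasure P n) := by
      rw [sampleMeasure]
      infer_instance
    exact prob_le_one
  -- lower bound via the sequence q = 1/(k+2)
  · have htend : Tendsto (fun k : ℕ => ENNReal.ofReal (1 - 1 / (k + 2 : ℝ)) ^ n)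
        atTop (nhds 1) := by
      have h0 : Tendsto (fun k : ℕ => 1 / ((k : ℝ) + 2)) atTop (nhds 0) := by
        have := (tendsto_one_div_add_atTop_nhds_zero_nat (𝕜 := ℝ)).comp (tendsto_add_atTop_nat 1)
        convert this using 2 with k
        simp only [Function.comp_apply]
        push_cast
        ring
      have h1 : Tendsto (fun k : ℕ => (1 : ℝ) - 1 / (k + 2 : ℝ)) atTop (nhds 1) := by
        simpa using (tendsto_const_nhds.sub h0)
      have h2 := ENNReal.tendsto_ofReal h1
      simp only [ENNReal.ofReal_one] at h2
      have h3 := ((ENNReal.continuous_pow n).tendsto 1).comp h2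
      rw [one_pow] at h3
      exact h3
    have hcond : ∃ K : ℕ, ∀ k ≥ K, |c / (1 / (k + 2 : ℝ)) ^ r - 1| > ε := by
      rcases le_or_gt c 0 with hcle | hcpos
      · refine ⟨0, fun k _ => ?_⟩
        have hqpos : (0 : ℝ) < (1 / (k + 2 : ℝ)) ^ r := by positivity
        have hd : c / (1 / (k + 2 : ℝ)) ^ r ≤ 0 := div_nonpos_of_nonpos_of_nonneg hcle hqpos.le
        have : (1 : ℝ) ≤ -(c / (1 / (k + 2 : ℝ)) ^ r - 1) := by linarith
        exact lt_of_lt_of_le hε1 (this.trans (neg_le_abs _))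
      · obtain ⟨K, hK⟩ := exists_nat_gt ((1 + ε) / c)
        refine ⟨K, fun k hk => ?_⟩
        set q : ℝ := 1 / (k + 2 : ℝ) with hq
        have hq0 : 0 < q := by positivity
        have hq1 : q ≤ 1 := by
          rw [hq, div_le_one (by positivity)]
          linarith [Nat.cast_nonneg (α := ℝ) k]
        have hqr : q ^ r ≤ q := pow_le_of_le_one hq0.le hq1 (by omega)
        have hklt : (1 + ε) / c < (k : ℝ) + 2 := by
          have : (K : ℝ) ≤ k := Nat.cast_le.2 hk
          linarith
        have hqlt : q < c / (1 + ε) := by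
          rw [hq, div_lt_div_iff₀ (by positivity) (by linarith)]
          calc 1 * (1 + ε) = (1 + ε) := one_mul _
            _ < c * ((k : ℝ) + 2) := by
                rw [div_lt_iff₀ hcpos] at hklt
                linarith [mul_comm c ((k : ℝ) + 2)]
        have hfrac : 1 + ε < c / q ^ r := by
          rw [lt_div_iff₀ (by positivity)]
          calc (1 + ε) * q ^ r ≤ (1 + ε) * q := by nlinarith
            _ < c := by
                rw [← lt_div_iff₀' (by linarith)] at *
                linarith [hqlt]
        have : ε < c / q ^ r - 1 := by linarith
        exact lt_of_lt_of_le this (le_abs_self _)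
    obtain ⟨K, hK⟩ := hcond
    refine le_of_tendsto htend (eventually_atTop.2 ⟨K, fun k hk => ?_⟩)
    have hq0 : (0 : ℝ) < 1 / (k + 2 : ℝ) := by positivity
    have hq1 : 1 / (k + 2 : ℝ) < 1 := by
      rw [div_lt_one (by positivity)]
      linarith [Nat.cast_nonneg (α := ℝ) k]
    exact key _ hq0 hq1 (hK k hk)

end
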